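/- arXiv:0904.4264 — 3 statements merged into one kernel-verified Lean document; each statement's English description precedes it below -/
import Mathlib

section
/- Let {α_n}_{n≥0} be a sequence of positive reals with lim_{n→∞} α_n = 0, limsup_{n→∞} |α_{n+1}^{-1} − α_n^{-1}| < ∞ and Σ_{n=0}^∞ α_n = ∞. Define γ_0 = 1 and γ_n = 1 + Σ_{i=0}^{n−1} α_i. If there exists r ∈ (1,∞) with Σ_{n=0}^∞ α_n² γ_n^{2r} < ∞, then there exists a real number s ∈ (0,1) such that Σ_{n=0}^∞ α_n^{1+s} γ_n^{r} < ∞ (in fact s = (2+r)/(2+2r) works). -/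
open Filter

private lemma weighted_le_add (A B t : ℝ) (hA : 0 ≤ A) (hB : 0 ≤ B)
    (ht : 0 ≤ t) (ht1 : t ≤ 1) : A ^ t * B ^ (1 - t) ≤ A + B := by
  rcases le_total A B with h | h
  · calc A ^ t * B ^ (1 - t) ≤ B ^ t * B ^ (1 - t) := by
          gcongr
        _ = B ^ (t + (1 - t)) := (Real.rpow_add' hB (by norm_num)).symm
        _ = B := by norm_num
        _ ≤ A + B := le_add_of_nonneg_left hA
  · calc A ^ t * B ^ (1 - t) ≤ A ^ t * A ^ (1 - t) := by
          have : 0 ≤ 1 - t := by linarith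
          gcongr
        _ = A ^ (t + (1 - t)) := (Real.rpow_add' hA (by norm_num)).symm
        _ = A := by norm_num
        _ ≤ A + B := le_add_of_nonneg_right hB

theorem stmt0 (α : ℕ → ℝ) (hpos : ∀ n, 0 < α n)
    (hlim : Tendsto α atTop (nhds 0))
    (hbdd : ∃ C : ℝ, ∀ᶠ n in atTop, |(α (n + 1))⁻¹ - (α n)⁻¹| ≤ C)
    (hdiv : ¬ Summable α)
    (γ : ℕ → ℝ) (hγ : ∀ n, γ n = 1 + ∑ i ∈ Finset.range n, α i)
    (r : ℝ) (hr : 1 < r)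
    (hsum : Summable (fun n => (α n) ^ 2 * (γ n) ^ (2 * r))) :
    ∃ s : ℝ, 0 < s ∧ s < 1 ∧
      Summable (fun n => (α n) ^ (1 + s) * (γ n) ^ r) := by
  have hr0 : (0:ℝ) < r := by linarith
  set s : ℝ := (2 + r) / (2 + 2 * r) with hs
  have hden : (0:ℝ) < 2 + 2 * r := by linarith
  have hs0 : 0 < s := div_pos (by linarith) hden
  have hs1 : s < 1 := (div_lt_one hden).2 (by linarith)
  -- γ basic facts
  have hγ1 : ∀ n, 1 ≤ γ n := by
    intro n
    rw [hγ n]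
    have : 0 ≤ ∑ i ∈ Finset.range n, α i :=
      Finset.sum_nonneg fun i _ => (hpos i).le
    linarith
  have hγpos : ∀ n, 0 < γ n := fun n => lt_of_lt_of_le one_pos (hγ1 n)
  have hγsucc : ∀ n, γ (n + 1) = γ n + α n := by
    intro n
    rw [hγ, hγ, Finset.sum_range_succ]
    ring
  -- summability of B n = α n / γ n ^ 2
  set B : ℕ → ℝ := fun n => α n / γ n ^ 2 with hB
  have hBpos : ∀ n, 0 < B n := fun n => div_pos (hpos n) (pow_pos (hγpos n) 2)
  have htel : Summable (fun n => (γ n)⁻¹ - (γ (n + 1))⁻¹) := by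
    apply summable_of_sum_range_le (c := 1)
    · intro n
      have h1 : γ n ≤ γ (n + 1) := by
        rw [hγsucc]; linarith [(hpos n).le, hpos n]
      have := inv_anti₀ (hγpos n) h1
      linarith
    · intro n
      rw [Finset.sum_range_sub' (fun i => (γ i)⁻¹)]
      have h0 : (γ 0)⁻¹ = 1 := by
        rw [hγ]; simp
      have : 0 < (γ n)⁻¹ := inv_pos.2 (hγpos n)
      rw [h0]; linarith
  have hαsmall : ∀ᶠ n in atTop, α n ≤ 1 := by
    have := hlim.eventually (eventually_le_nhds (by norm_num : (0:ℝ) < 1))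
    filter_upwards [this] with n hn
    exact hn.trans (by norm_num)
  have hBsum : Summable B := by
    have hO : B =O[atTop] (fun n => (γ n)⁻¹ - (γ (n + 1))⁻¹) := by
      apply Asymptotics.IsBigO.of_bound 4
      filter_upwards [hαsmall] with n hn
      have hγn := hγpos n
      have hγn1 := hγpos (n + 1)
      have h2 : γ (n + 1) ≤ 2 * γ n := by
        rw [hγsucc]; linarith [hγ1 n]
      have hdiff : (γ n)⁻¹ - (γ (n + 1))⁻¹ = α n / (γ n * γ (n + 1)) := by
        rw [inv_sub_inv hγn.ne' hγn1.ne', hγsucc]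
        congr 1
        ring
      rw [Real.norm_eq_abs, Real.norm_eq_abs, abs_of_pos (hBpos n), hdiff,
        abs_of_pos (div_pos (hpos n) (mul_pos hγn hγn1))]
      simp only [hB]
      rw [← mul_div_assoc, div_le_div_iff₀ (pow_pos hγn 2) (mul_pos hγn hγn1)]
      have : γ n * γ (n + 1) ≤ 2 * γ n ^ 2 := by nlinarith
      nlinarith [hpos n]
    exact summable_of_isBigO_nat htel hO
  -- pointwise bound via weighted AM
  refine ⟨s, hs0, hs1, ?_⟩
  have key : ∀ n, α n ^ (1 + s) * γ n ^ r ≤ α n ^ 2 * γ n ^ (2 * r) + B n := by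
    intro n
    have hx := hpos n
    have hy := hγpos n
    have hid : α n ^ (1 + s) * γ n ^ r
        = (α n ^ 2 * γ n ^ (2 * r)) ^ s * (B n) ^ (1 - s) := by
      rw [hB]
      rw [Real.mul_rpow (by positivity) (by positivity),
        Real.div_rpow hx.le (by positivity),
        ← Real.rpow_natCast (α n) 2, ← Real.rpow_natCast (γ n) 2,
        ← Real.rpow_mul hx.le, ← Real.rpow_mul hy.le, ← Real.rpow_mul hy.le]
      rw [div_eq_mul_inv, ← Real.rpow_neg hy.le]
      rw [mul_mul_mul_comm, ← Real.rpow_add hx, ← Real.rpow_add hy]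
      have hne : (2 + 2 * r) ≠ 0 := by linarith
      have h1 : (2:ℕ) * s + (1 - s) = 1 + s := by push_cast; ring
      have h2 : 2 * r * s + -((2:ℕ) * (1 - s)) = r := by
        rw [hs]; push_cast; field_simp; ring
      rw [h1, h2]
    rw [hid]
    exact weighted_le_add _ _ _ (by positivity) (hBpos n).le hs0.le hs1.le
  apply Summable.of_nonneg_of_le (fun n => mul_nonneg (Real.rpow_nonneg (hpos n).le _) (Real.rpow_nonneg (hγpos n).le _)) key
  exact hsum.add hBsum
end

section
/- Let (E, ‖·‖) be a normed space, S ⊆ E, ε ∈ (0,1), C ≥ 1, L ≥ 0, and let θ', θ'' be two parameters. Suppose {G^{i:n}} are iterated maps (for parameter θ') satisfying ‖G^{i:n}(x) − G^{i:n}(y)‖ ≤ C ε^{n−i} ‖x − y‖ for all x, y ∈ S and m ≤ i ≤ n, and suppose the one-step maps at the two parameters satisfy ‖G'_{i}(x) − G''_{i}(x)‖ ≤ L for all x ∈ S and all i (where L plays the role of a bound of the form (Lipschitz constant in θ) · ‖θ' − θ''‖). Let F', F'' denote the full compositions from index m to n at parameters θ', θ'' respectively, both mapping S into S. Then ‖F'(x)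 − F''(x)‖ ≤ C L Σ_{i=m}^{n−1} ε^{n−i−1} ≤ C L / (1 − ε) for all x ∈ S. -/
private lemma telescope_Ico {E : Type*} [AddCommGroup E] (H : ℕ → E) :
    ∀ m n : ℕ, m ≤ n → H m - H n = ∑ i ∈ Finset.Ico m n, (H i - H (i + 1)) := by
  intro m n hmn
  induction n, hmn using Nat.le_induction with
  | base => simp
  | succ n hmn ih =>
    rw [Finset.sum_Ico_succ_top hmn, ← ih]
    abel

theorem stmt10 {E : Type*} [NormedAddCommGroup E] [NormedSpace ℝ E]
    (S : Set E) (ε : ℝ) (hε0 : 0 < ε) (hε1 : ε < 1)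
    (C L : ℝ) (hC : 1 ≤ C) (hL : 0 ≤ L)
    (G' G'' : ℕ → E → E) (comp' comp'' : ℕ → ℕ → E → E)
    (hrec'0 : ∀ m x, comp' m m x = x)
    (hrec'S : ∀ m n x, m ≤ n → comp' m (n + 1) x = G' (n + 1) (comp' m n x))
    (hrec''0 : ∀ m x, comp'' m m x = x)
    (hrec''S : ∀ m n x, m ≤ n → comp'' m (n + 1) x = G'' (n + 1) (comp'' m n x))
    (hmaps' : ∀ k, ∀ x ∈ S, G' k x ∈ S)
    (hmaps'' : ∀ k, ∀ x ∈ S, G'' k x ∈ S)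
    (m n : ℕ) (hmn : m ≤ n)
    (hcontr : ∀ i, m ≤ i → i ≤ n → ∀ x ∈ S, ∀ y ∈ S,
      ‖comp' i n x - comp' i n y‖ ≤ C * ε ^ (n - i) * ‖x - y‖)
    (hdisc : ∀ i, ∀ x ∈ S, ‖G' i x - G'' i x‖ ≤ L) :
    ∀ x ∈ S,
      ‖comp' m n x - comp'' m n x‖ ≤
          C * L * ∑ i ∈ Finset.Ico m n, ε ^ (n - i - 1) ∧
        ‖comp' m n x - comp'' m n x‖ ≤ C * L / (1 - ε) := by
  -- front-step recursion for comp'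
  have front : ∀ i k x, i < k → comp' i k x = comp' (i + 1) k (G' (i + 1) x) := by
    intro i k x hik
    induction k, hik using Nat.le_induction with
    | base => rw [hrec'S i i x le_rfl, hrec'0, hrec'0]
    | succ k hik ih =>
      rw [hrec'S i k x (Nat.le_of_succ_le hik), ih, ← hrec'S (i + 1) k _ hik]
  -- membership of comp''
  have mem'' : ∀ i, m ≤ i → ∀ x ∈ S, comp'' m i x ∈ S := by
    intro i hi x hx
    induction i, hi using Nat.le_induction with
    | base => rwa [hrec''0]
    | succ i hi ih => rw [hrec''S m i x hi]; exact hmaps'' _ _ ih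
  intro x hx
  set H : ℕ → E := fun i => comp' i n (comp'' m i x) with hH
  have hHm : H m = comp' m n x := by simp [hH, hrec''0]
  have hHn : H n = comp'' m n x := by simp [hH, hrec'0]
  have key : comp' m n x - comp'' m n x = ∑ i ∈ Finset.Ico m n, (H i - H (i + 1)) := by
    rw [← hHm, ← hHn]; exact telescope_Ico H m n hmn
  -- termwise bound
  have term : ∀ i ∈ Finset.Ico m n, ‖H i - H (i + 1)‖ ≤ C * L * ε ^ (n - i - 1) := by
    intro i hi
    rw [Finset.mem_Ico] at hi
    obtain ⟨him, hin⟩ := hi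
    have hy : comp'' m i x ∈ S := mem'' i him x hx
    have h1 : H i = comp' (i + 1) n (G' (i + 1) (comp'' m i x)) := front i n _ hin
    have h2 : H (i + 1) = comp' (i + 1) n (G'' (i + 1) (comp'' m i x)) := by
      simp only [hH, hrec''S m i x him]
    rw [h1, h2]
    calc ‖comp' (i+1) n (G' (i+1) (comp'' m i x)) - comp' (i+1) n (G'' (i+1) (comp'' m i x))‖
        ≤ C * ε ^ (n - (i + 1)) * ‖G' (i+1) (comp'' m i x) - G'' (i+1) (comp'' m i x)‖ :=
          hcontr (i + 1) (Nat.le_succ_of_le him) hin _ (hmaps' _ _ hy) _ (hmaps'' _ _ hy)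
      _ ≤ C * ε ^ (n - (i + 1)) * L := by
          refine mul_le_mul_of_nonneg_left (hdisc _ _ hy) ?_
          positivity
      _ = C * L * ε ^ (n - i - 1) := by rw [Nat.sub_sub]; ring
  have bound1 : ‖comp' m n x - comp'' m n x‖ ≤
      C * L * ∑ i ∈ Finset.Ico m n, ε ^ (n - i - 1) := by
    rw [key, Finset.mul_sum]
    exact (norm_sum_le _ _).trans (Finset.sum_le_sum term)
  refine ⟨bound1, bound1.trans ?_⟩
  -- geometric bound
  have hsum : ∑ i ∈ Finset.Ico m n, ε ^ (n - i - 1) = ∑ j ∈ Finset.range (n - m), ε ^ j := by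
    refine Finset.sum_nbij' (fun i => n - 1 - i) (fun j => n - 1 - j) ?_ ?_ ?_ ?_ ?_
    · intro i hi
      rw [Finset.mem_Ico] at hi
      simp only [Finset.mem_range]
      omega
    · intro j hj
      rw [Finset.mem_range] at hj
      simp only [Finset.mem_Ico]
      omega
    · intro i hi; rw [Finset.mem_Ico] at hi; omega
    · intro j hj; rw [Finset.mem_range] at hj; omega
    · intro i hi
      rw [Finset.mem_Ico] at hi
      congr 1
      omega
  rw [hsum]
  have h1ε : (0 : ℝ) < 1 - ε := by linarith
  have hgeom : ∑ j ∈ Finset.range (n - m), ε ^ j ≤ 1 / (1 - ε) := by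
    rw [geom_sum_eq (ne_of_lt hε1)]
    have h2 : (ε ^ (n - m) - 1) / (ε - 1) = (1 - ε ^ (n - m)) / (1 - ε) := by
      rw [← neg_div_neg_eq]; ring_nf
    rw [h2, div_le_div_iff₀ h1ε h1ε]
    have : 0 < ε ^ (n - m) := pow_pos hε0 _
    nlinarith
  calc C * L * ∑ j ∈ Finset.range (n - m), ε ^ j
      ≤ C * L * (1 / (1 - ε)) := by
        refine mul_le_mul_of_nonneg_left hgeom ?_
        positivity
    _ = C * L / (1 - ε) := by ring
end

section
/- Let f : ℝ^d → ℝ be C¹ with ∇f Lipschitz with constant C and ‖∇f(θ)‖ ≤ C on a compact set Q. Let {α_n}_{n≥0} be positive reals with Σ α_n = ∞, let {ξ_n} be in ℝ^d, and let θ_{n+1} = θ_n + α_n(∇f(θ_n) + ξ_n). Assume (a) θ_n ∈ Q for all n; (b) Σ_{n=0}^∞ α_n ‖∇f(θ_n)‖² < ∞; (c) sup_{k≥n} ‖Σ_{i=n}^{k} α_i ξ_i‖ → 0 as n → ∞. Then lim_{n→∞} ∇f(θ_n) = 0. -/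
set_option maxHeartbeats 1000000


open Filter

theorem stmt13 (d : ℕ)
    (f : EuclideanSpace ℝ (Fin d) → ℝ) (hf : ContDiff ℝ 1 f)
    (Q : Set (EuclideanSpace ℝ (Fin d))) (hQcompact : IsCompact Q)
    (C : ℝ) (hC : 0 < C)
    (hlip : ∀ x ∈ Q, ∀ y ∈ Q, ‖gradient f x - gradient f y‖ ≤ C * ‖x - y‖)
    (hbd : ∀ x ∈ Q, ‖gradient f x‖ ≤ C)
    (α : ℕ → ℝ) (hα : ∀ n, 0 < α n) (hdiv : ¬ Summable α)
    (ξ θ : ℕ → EuclideanSpace ℝ (Fin d))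
    (hrec : ∀ n, θ (n + 1) = θ n + α n • (gradient f (θ n) + ξ n))
    (ha : ∀ n, θ n ∈ Q)
    (hb : Summable (fun n => α n * ‖gradient f (θ n)‖ ^ 2))
    (hc : ∀ ε > 0, ∃ N, ∀ n ≥ N, ∀ k ≥ n,
      ‖∑ i ∈ Finset.Icc n k, α i • ξ i‖ < ε) :
    Tendsto (fun n => gradient f (θ n)) atTop (nhds 0) := by
  set g : ℕ → ℝ := fun n => ‖gradient f (θ n)‖ with hgdef
  have hgnn : ∀ n, 0 ≤ g n := fun n => norm_nonneg _
  by_contra hnot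
  rw [Metric.tendsto_atTop] at hnot
  push_neg at hnot
  obtain ⟨ε0, hε0, hfreq⟩ := hnot
  set ε : ℝ := ε0 / 2 with hεdef
  have hε : 0 < ε := by positivity
  -- infinitely often g < ε
  have hsmall : ∀ N : ℕ, ∃ m, N ≤ m ∧ g m < ε := by
    intro N
    by_contra hcon
    push_neg at hcon
    apply hdiv
    rw [← summable_nat_add_iff N]
    have hsum' : Summable (fun i : ℕ => α (i + N) * g (i + N) ^ 2) :=
      (summable_nat_add_iff N).2 hb
    refine Summable.of_nonneg_of_le (fun i => (hα _).le) ?_ (hsum'.mul_left (ε⁻¹ ^ 2))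
    · intro i
      have h1 : ε ≤ g (i + N) := hcon _ (Nat.le_add_left N i)
      have h2 : ε ^ 2 ≤ g (i + N) ^ 2 := by nlinarith
      rw [inv_pow]
      rw [inv_mul_eq_div, le_div_iff₀ (by positivity)]
      nlinarith [(hα (i + N)).le]
  -- tails of the summable series tend to 0
  have htail : Tendsto (fun N => ∑' k, α (k + N) * g (k + N) ^ 2) atTop (nhds 0) := by
    simpa using tendsto_sum_nat_add (fun k => α k * g k ^ 2)
  have hεbound : (0:ℝ) < ε ^ 3 / (2 * C ^ 2) := by positivity
  obtain ⟨N₀, hN₀⟩ := (eventually_atTop.1 (htail.eventually_lt_const hεbound))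
  obtain ⟨N₁, hN₁⟩ := hc (ε / (2 * C)) (by positivity)
  set N := max N₀ N₁ with hNdef
  obtain ⟨n, hnN, hgn⟩ := hfreq N
  rw [dist_zero_right] at hgn
  have hgn' : 2 * ε ≤ g n := by
    have : ε0 = 2 * ε := by rw [hεdef]; ring
    rw [← this]; exact hgn
  obtain ⟨m₀, hm₀N, hm₀⟩ := hsmall (n + 1)
  have hex : ∃ m, n + 1 ≤ m ∧ g m < ε := ⟨m₀, hm₀N, hm₀⟩
  obtain ⟨m, ⟨hmn, hgm⟩, hmin⟩ :
      ∃ m, (n + 1 ≤ m ∧ g m < ε) ∧ ∀ i, i < m → ¬(n + 1 ≤ i ∧ g i < ε) :=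
    ⟨Nat.find hex, Nat.find_spec hex, fun i hi => Nat.find_min hex hi⟩
  -- on [n, m) the gradient norm is ≥ ε
  have hge : ∀ i, n ≤ i → i < m → ε ≤ g i := by
    intro i hi1 hi2
    rcases eq_or_lt_of_le hi1 with h | h
    · rw [← h]; linarith
    · have : ¬ (n + 1 ≤ i ∧ g i < ε) := hmin i hi2
      push_neg at this
      exact this h
  have hnm : n ≤ m := le_trans (Nat.le_succ n) hmn
  -- sum of α's over the interval is small
  have htailn : ∑' k, α (k + n) * g (k + n) ^ 2 < ε ^ 3 / (2 * C ^ 2) :=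
    hN₀ n (le_trans (le_max_left _ _) hnN)
  have hsumle : ∑ i ∈ Finset.Ico n m, (α i * g i ^ 2) ≤ ∑' k, α (k + n) * g (k + n) ^ 2 := by
    rw [Finset.sum_Ico_eq_sum_range]
    have := Summable.sum_le_tsum (Finset.range (m - n))
      (f := fun k : ℕ => α (k + n) * g (k + n) ^ 2)
      (fun i _ => mul_nonneg (hα _).le (sq_nonneg _)) ((summable_nat_add_iff n).2 hb)
    refine le_trans (le_of_eq ?_) this
    apply Finset.sum_congr rfl
    intro i _
    rw [add_comm n i]
  have hSal : ∑ i ∈ Finset.Ico n m, α i ≤ ε⁻¹ ^ 2 * (ε ^ 3 / (2 * C ^ 2)) := by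
    have h1 : ε ^ 2 * ∑ i ∈ Finset.Ico n m, α i ≤ ∑ i ∈ Finset.Ico n m, (α i * g i ^ 2) := by
      rw [Finset.mul_sum]
      apply Finset.sum_le_sum
      intro i hi
      rw [Finset.mem_Ico] at hi
      have h3 := hge i hi.1 hi.2
      have hsq : ε ^ 2 ≤ g i ^ 2 := by nlinarith [hε.le]
      nlinarith [mul_le_mul_of_nonneg_right hsq (hα i).le]
    have h2 : ε ^ 2 * ∑ i ∈ Finset.Ico n m, α i < ε ^ 3 / (2 * C ^ 2) := lt_of_le_of_lt h1 (lt_of_le_of_lt hsumle htailn)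
    rw [inv_pow]
    rw [inv_mul_eq_div, le_div_iff₀ (by positivity)]
    nlinarith
  -- telescoping
  have htele : θ m - θ n = (∑ i ∈ Finset.Ico n m, α i • gradient f (θ i))
      + ∑ i ∈ Finset.Ico n m, α i • ξ i := by
    have h1 : ∀ k : ℕ, θ (k + 1) - θ k = α k • gradient f (θ k) + α k • ξ k := by
      intro k
      rw [hrec k, smul_add]
      abel
    have h2 : ∑ i ∈ Finset.Ico n m, (θ (i + 1) - θ i) = θ m - θ n := by
      rw [Finset.sum_Ico_eq_sub _ hnm, Finset.sum_range_sub, Finset.sum_range_sub]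
      abel
    rw [← h2, ← Finset.sum_add_distrib]
    exact Finset.sum_congr rfl (fun i _ => h1 i)
  -- bound the gradient part
  have hnorm1 : ‖∑ i ∈ Finset.Ico n m, α i • gradient f (θ i)‖ ≤ C * ∑ i ∈ Finset.Ico n m, α i := by
    refine le_trans (norm_sum_le _ _) ?_
    rw [Finset.mul_sum]
    apply Finset.sum_le_sum
    intro i _
    rw [norm_smul, Real.norm_of_nonneg (hα i).le]
    have := hbd (θ i) (ha i)
    nlinarith [(hα i).le]
  -- bound the noise part
  have hIcoIcc : Finset.Ico n m = Finset.Icc n (m - 1) := by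
    ext x
    simp only [Finset.mem_Ico, Finset.mem_Icc]
    omega
  have hnorm2 : ‖∑ i ∈ Finset.Ico n m, α i • ξ i‖ < ε / (2 * C) := by
    rw [hIcoIcc]
    exact hN₁ n (le_trans (le_max_right _ _) hnN) (m - 1) (by omega)
  -- the contradiction
  have hθ : ‖θ m - θ n‖ < C * (ε⁻¹ ^ 2 * (ε ^ 3 / (2 * C ^ 2))) + ε / (2 * C) := by
    rw [htele]
    refine lt_of_le_of_lt (norm_add_le _ _) ?_
    have := mul_le_mul_of_nonneg_left hSal hC.le
    linarith [le_trans hnorm1 this, hnorm2]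
  have hdiff : ε ≤ ‖gradient f (θ n) - gradient f (θ m)‖ := by
    have := norm_sub_norm_le (gradient f (θ n)) (gradient f (θ m))
    have h1 : g n - g m ≤ ‖gradient f (θ n) - gradient f (θ m)‖ := this
    linarith
  have hlip' : ‖gradient f (θ n) - gradient f (θ m)‖ ≤ C * ‖θ n - θ m‖ :=
    hlip _ (ha n) _ (ha m)
  have hfinal : C * ‖θ m - θ n‖ < ε := by
    have h1 : C * (C * (ε⁻¹ ^ 2 * (ε ^ 3 / (2 * C ^ 2))) + ε / (2 * C)) = ε := by
      field_simp
      ring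
    calc C * ‖θ m - θ n‖ < C * (C * (ε⁻¹ ^ 2 * (ε ^ 3 / (2 * C ^ 2))) + ε / (2 * C)) :=
          (mul_lt_mul_iff_right₀ hC).2 hθ
      _ = ε := h1
  have heq : ‖θ n - θ m‖ = ‖θ m - θ n‖ := norm_sub_rev _ _
  rw [heq] at hlip'
  linarith
end
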